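/- Let T be a subcategory of an extriangulated category C with enough projectives and injectives. Then pd(T) ≤ n if and only if T^⊥ is closed under n-images, i.e. Pres^n(T^⊥) = T^⊥. -/

import Mathlib

open CategoryTheory Opposite Limits

universe v u

namespace ExtTilting

variable (C : Type u) [Category.{v} C] [Preadditive C] [HasFiniteBiproducts C] [HasBinaryBiproducts C]

/-- A Krull-Schmidt category: every object is a finite biproduct of objects
with local endomorphism rings. -/
def IsKrullSchmidt : Prop :=
  ∀ X : C, ∃ (n : ℕ) (f : Fin n → C),
    (∀ i, IsLocalRing (End (f i))) ∧ Nonempty (X ≅ ⨁ f)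

/-- An extriangulated category structure (Nakaoka–Palu) on an additive category `C`:
a biadditive functor `E : Cᵒᵖ × C ⥤ Ab` together with a realization of each
`E`-extension `δ ∈ E(X, A)` by conflations `A ⟶ B ⟶ X`, satisfying (ET1)–(ET4)
and their duals.  `IsConf f g δ` means that the sequence `A ⟶ B ⟶ X` given by
`f, g` realizes the extension `δ`. -/
structure ExtCat where
  /-- the biadditive functor `E : Cᵒᵖ × C ⥤ Ab`; `E(X, A) = (E.obj (op X)).obj A` -/
  E : Cᵒᵖ ⥤ C ⥤ AddCommGrpCat.{v}
  E_additive_right : ∀ X : Cᵒᵖ, (E.obj X).Additive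
  E_additive_left : ∀ A : C, (E.flip.obj A).Additive
  /-- `IsConf f g δ`: the sequence `A ⟶ B ⟶ X` realizes `δ ∈ E(X, A)` -/
  IsConf : ∀ {A B X : C}, (A ⟶ B) → (B ⟶ X) → ((E.obj (op X)).obj A) → Prop
  /-- every extension is realized by some conflation -/
  real_exists : ∀ {A X : C} (δ : (E.obj (op X)).obj A),
    ∃ (B : C) (f : A ⟶ B) (g : B ⟶ X), IsConf f g δ
  /-- any two realizations of the same extension are equivalent -/
  real_unique : ∀ {A B B' X : C} {f : A ⟶ B} {g : B ⟶ X} {f' : A ⟶ B'} {g' : B' ⟶ X}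
      {δ : (E.obj (op X)).obj A}, IsConf f g δ → IsConf f' g' δ →
      ∃ b : B ≅ B', f ≫ b.hom = f' ∧ b.hom ≫ g' = g
  /-- the zero extension is realized by the split sequence -/
  real_zero : ∀ A X : C,
    IsConf (biprod.inl : A ⟶ A ⊞ X) (biprod.snd : A ⊞ X ⟶ X) (0 : (E.obj (op X)).obj A)
  /-- realization of morphisms of extensions -/
  real_map : ∀ {A B X A' B' X' : C} {f : A ⟶ B} {g : B ⟶ X} {f' : A' ⟶ B'} {g' : B' ⟶ X'}
      {δ : (E.obj (op X)).obj A} {δ' : (E.obj (op X')).obj A'}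
      (a : A ⟶ A') (c : X ⟶ X'),
      IsConf f g δ → IsConf f' g' δ' →
      (E.obj (op X)).map a δ = (E.map c.op).app A' δ' →
      ∃ b : B ⟶ B', f ≫ b = a ≫ f' ∧ b ≫ g' = g ≫ c
  /-- (ET3) -/
  et3 : ∀ {A B X A' B' X' : C} {f : A ⟶ B} {g : B ⟶ X} {f' : A' ⟶ B'} {g' : B' ⟶ X'}
      {δ : (E.obj (op X)).obj A} {δ' : (E.obj (op X')).obj A'}
      (a : A ⟶ A') (b : B ⟶ B'),
      IsConf f g δ → IsConf f' g' δ' → f ≫ b = a ≫ f' →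
      ∃ c : X ⟶ X', g ≫ c = b ≫ g' ∧
        (E.obj (op X)).map a δ = (E.map c.op).app A' δ'
  /-- (ET3ᵒᵖ) -/
  et3op : ∀ {A B X A' B' X' : C} {f : A ⟶ B} {g : B ⟶ X} {f' : A' ⟶ B'} {g' : B' ⟶ X'}
      {δ : (E.obj (op X)).obj A} {δ' : (E.obj (op X')).obj A'}
      (b : B ⟶ B') (c : X ⟶ X'),
      IsConf f g δ → IsConf f' g' δ' → g ≫ c = b ≫ g' →
      ∃ a : A ⟶ A', f ≫ b = a ≫ f' ∧
        (E.obj (op X)).map a δ = (E.map c.op).app A' δ'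
  /-- (ET4) -/
  et4 : ∀ {A B D F : C} {Cc : C} {f : A ⟶ B} {f' : B ⟶ D} {g : B ⟶ Cc} {g' : Cc ⟶ F}
      {δ : (E.obj (op D)).obj A} {δ' : (E.obj (op F)).obj B},
      IsConf f f' δ → IsConf g g' δ' →
      ∃ (Ee : C) (d : D ⟶ Ee) (e : Ee ⟶ F) (h' : Cc ⟶ Ee)
        (δ'' : (E.obj (op Ee)).obj A),
        IsConf (f ≫ g) h' δ'' ∧
        IsConf d e ((E.obj (op F)).map f' δ') ∧
        g ≫ h' = f' ≫ d ∧ h' ≫ e = g' ∧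
        (E.map d.op).app A δ'' = δ ∧
        (E.obj (op Ee)).map f δ'' = (E.map e.op).app B δ'
  /-- (ET4ᵒᵖ) -/
  et4op : ∀ {D A B F : C} {Cc : C} {f' : D ⟶ A} {f : A ⟶ B} {g' : F ⟶ B} {g : B ⟶ Cc}
      {δ : (E.obj (op B)).obj D} {δ' : (E.obj (op Cc)).obj F},
      IsConf f' f δ → IsConf g' g δ' →
      ∃ (Ee : C) (d : D ⟶ Ee) (e : Ee ⟶ F) (h' : Ee ⟶ A)
        (δ'' : (E.obj (op Cc)).obj Ee),
        IsConf h' (f ≫ g) δ'' ∧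
        IsConf d e ((E.map g'.op).app D δ) ∧
        d ≫ h' = f' ∧ e ≫ g' = h' ≫ f ∧
        (E.obj (op Cc)).map e δ'' = δ' ∧
        (E.obj (op B)).map d δ = (E.map g.op).app Ee δ''

/-- An extriangulated category with enough projectives and enough injectives,
together with chosen syzygies `Ω` and cosyzygies `Susp` (used to define the
higher extension groups `E^{i+1}(X, A) = E(X, Suspᶦ A)`). -/
structure ECat extends ExtCat C where
  /-- chosen projective cover object -/
  P : C → C
  /-- chosen syzygy -/
  Ω : C → C
  ιP : ∀ X : C, Ω X ⟶ P X
  πP : ∀ X : C, P X ⟶ X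
  δP : ∀ X : C, (E.obj (op X)).obj (Ω X)
  confP : ∀ X : C, IsConf (ιP X) (πP X) (δP X)
  P_projective : ∀ (X A : C) (δ : (E.obj (op (P X))).obj A), δ = 0
  /-- chosen injective hull object -/
  I : C → C
  /-- chosen cosyzygy -/
  Susp : C → C
  ιI : ∀ A : C, A ⟶ I A
  πI : ∀ A : C, I A ⟶ Susp A
  δI : ∀ A : C, (E.obj (op (Susp A))).obj A
  confI : ∀ A : C, IsConf (ιI A) (πI A) (δI A)
  I_injective : ∀ (A X : C) (δ : (E.obj (op X)).obj (I A)), δ = 0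

namespace ECat

variable {C} (𝒞 : ECat C)

/-- The group `E(X, A)` of `E`-extensions. -/
def Eext (X A : C) : AddCommGrpCat.{v} := (𝒞.E.obj (op X)).obj A

/-- `Tri A B X` : there is an `E`-triangle `A ⟶ B ⟶ X`. -/
def Tri (A B X : C) : Prop :=
  ∃ (f : A ⟶ B) (g : B ⟶ X) (δ : 𝒞.Eext X A), 𝒞.IsConf f g δ

/-- projective objects: `E(P, A) = 0` for all `A` -/
def Projective (P : C) : Prop := ∀ (A : C) (δ : 𝒞.Eext P A), δ = 0

/-- injective objects: `E(X, I) = 0` for all `X` -/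
def Injective (I : C) : Prop := ∀ (X : C) (δ : 𝒞.Eext X I), δ = 0

/-- `extVanish i X A` says that the higher extension group
`E^{i+1}(X, A) = E(X, Suspᶦ A)` vanishes. -/
def extVanish (i : ℕ) (X A : C) : Prop := ∀ δ : 𝒞.Eext X (𝒞.Susp^[i] A), δ = 0

/-- `S^⊥ = {Y | E^i(T, Y) = 0 for all i ≥ 1, T ∈ S}` -/
def rperp (S : Set C) : Set C := {Y | ∀ T ∈ S, ∀ i : ℕ, 𝒞.extVanish i T Y}

/-- `^⊥S = {Y | E^i(Y, T) = 0 for all i ≥ 1, T ∈ S}` -/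
def lperp (S : Set C) : Set C := {Y | ∀ T ∈ S, ∀ i : ℕ, 𝒞.extVanish i Y T}

/-- `S^{⊥₁} = {Y | E(T, Y) = 0 for all T ∈ S}` -/
def rperp1 (S : Set C) : Set C := {Y | ∀ T ∈ S, ∀ δ : 𝒞.Eext T Y, δ = 0}

/-- `^{⊥₁}S = {Y | E(Y, T) = 0 for all T ∈ S}` -/
def lperp1 (S : Set C) : Set C := {Y | ∀ T ∈ S, ∀ δ : 𝒞.Eext Y T, δ = 0}

/-- self-orthogonal subcategory: `E^i(T₁, T₂) = 0` for all `i ≥ 1`, `T₁, T₂ ∈ S` -/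
def SelfOrth (S : Set C) : Prop := ∀ T₁ ∈ S, ∀ T₂ ∈ S, ∀ i : ℕ, 𝒞.extVanish i T₁ T₂

/-- `Resol S n A' A` : there is an `E`-triangle sequence
`A' → S_n → ⋯ → S_1 → A` with all `S_i ∈ S`. -/
def Resol (S : Set C) : ℕ → C → C → Prop
  | 0, A', A => A' = A
  | n + 1, A', A => ∃ T K, T ∈ S ∧ 𝒞.Tri K T A ∧ Resol S n A' K

/-- `Coresol S n A A'` : there is an `E`-triangle sequence
`A → S_1 → ⋯ → S_n → A'` with all `S_i ∈ S`. -/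
def Coresol (S : Set C) : ℕ → C → C → Prop
  | 0, A, A' => A = A'
  | n + 1, A, A' => ∃ T K, T ∈ S ∧ 𝒞.Tri A T K ∧ Coresol S n K A'

/-- `Pres S n` : objects `A` admitting an `E`-triangle sequence
`A' → S_n → ⋯ → S_1 → A` with all `S_i ∈ S`. -/
def Pres (S : Set C) (n : ℕ) : Set C := {A | ∃ A', Resol 𝒞 S n A' A}

/-- `Copres S n` : objects `A` admitting an `E`-triangle sequence
`A → S_1 → ⋯ → S_n → A'` with all `S_i ∈ S`. -/
def Copres (S : Set C) (n : ℕ) : Set C := {A | ∃ A', Coresol 𝒞 S n A A'}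

/-- `Š_n` : objects admitting a finite `S`-coresolution `A → S_0 → ⋯ → S_n`. -/
def CheckN (S : Set C) : ℕ → Set C
  | 0 => S
  | n + 1 => {A | ∃ T K, T ∈ S ∧ 𝒞.Tri A T K ∧ K ∈ CheckN S n}

/-- `Ŝ_n` : objects admitting a finite `S`-resolution `S_n → ⋯ → S_0 → A`. -/
def HatN (S : Set C) : ℕ → Set C
  | 0 => S
  | n + 1 => {A | ∃ T K, T ∈ S ∧ 𝒞.Tri K T A ∧ K ∈ HatN S n}

/-- `Š = ⋃ₙ Š_n` -/
def Check (S : Set C) : Set C := ⋃ n : ℕ, CheckN 𝒞 S n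

/-- `Ŝ = ⋃ₙ Ŝ_n` -/
def Hat (S : Set C) : Set C := ⋃ n : ℕ, HatN 𝒞 S n

/-- projective dimension at most `n` : there is a projective resolution of length `n` -/
def projDimLE (A : C) (n : ℕ) : Prop := A ∈ HatN 𝒞 {P | 𝒞.Projective P} n

/-- injective dimension at most `n` -/
def injDimLE (A : C) (n : ℕ) : Prop := A ∈ CheckN 𝒞 {I | 𝒞.Injective I} n

/-- `S` is a generator for `Y` : `S ⊆ Y` and every `A ∈ Y` admits an
`E`-triangle `A' → T → A` with `T ∈ S`, `A' ∈ Y`. -/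
def GeneratorFor (S Y : Set C) : Prop :=
  S ⊆ Y ∧ ∀ A ∈ Y, ∃ A' T, T ∈ S ∧ A' ∈ Y ∧ 𝒞.Tri A' T A

/-- `S` is a cogenerator for `Y` : `S ⊆ Y` and every `A ∈ Y` admits an
`E`-triangle `A → T → A'` with `T ∈ S`, `A' ∈ Y`. -/
def CogeneratorFor (S Y : Set C) : Prop :=
  S ⊆ Y ∧ ∀ A ∈ Y, ∃ A' T, T ∈ S ∧ A' ∈ Y ∧ 𝒞.Tri A T A'

/-- `_S X` : objects `A` admitting an `E`-triangle sequence
`⋯ → T₁ → T₀ → A` with all `Tᵢ ∈ S` and all cocones in `S^⊥`. -/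
def genSub (S : Set C) : Set C :=
  {A | ∃ K T : ℕ → C, (∀ n, T n ∈ S) ∧ (∀ n, K n ∈ 𝒞.rperp S) ∧
    𝒞.Tri (K 0) (T 0) A ∧ ∀ n, 𝒞.Tri (K (n + 1)) (T (n + 1)) (K n)}

/-- `X_S` : objects `A` admitting an `E`-triangle sequence
`A → T₀ → T₁ → ⋯` with all `Tᵢ ∈ S` and all cones in `^⊥S`. -/
def cogenSub (S : Set C) : Set C :=
  {A | ∃ K T : ℕ → C, (∀ n, T n ∈ S) ∧ (∀ n, K n ∈ 𝒞.lperp S) ∧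
    𝒞.Tri A (T 0) (K 0) ∧ ∀ n, 𝒞.Tri (K n) (T (n + 1)) (K (n + 1))}

/-- closed under extensions -/
def ClosedExt (S : Set C) : Prop :=
  ∀ A B X : C, 𝒞.Tri A B X → A ∈ S → X ∈ S → B ∈ S

/-- closed under cones of inflations (resp. of deflations) -/
def ClosedCone (S : Set C) : Prop :=
  ∀ A B X : C, 𝒞.Tri A B X → A ∈ S → B ∈ S → X ∈ S

/-- closed under cocones of deflations -/
def ClosedCocone (S : Set C) : Prop :=
  ∀ A B X : C, 𝒞.Tri A B X → B ∈ S → X ∈ S → A ∈ S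

/-- closed under direct summands -/
def ClosedSummands (S : Set C) : Prop :=
  ∀ A B : C, (A ⊞ B) ∈ S → A ∈ S ∧ B ∈ S

/-- closed under isomorphisms -/
def ClosedIso (S : Set C) : Prop := ∀ A B : C, (A ≅ B) → A ∈ S → B ∈ S

/-- coresolving : contains the injectives, closed under extensions and
cones of deflations -/
def Coresolving (S : Set C) : Prop :=
  (∀ I : C, 𝒞.Injective I → I ∈ S) ∧ 𝒞.ClosedExt S ∧ 𝒞.ClosedCone S

/-- resolving : contains the projectives, closed under extensions and
cocones of inflations -/
def Resolving (S : Set C) : Prop :=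
  (∀ P : C, 𝒞.Projective P → P ∈ S) ∧ 𝒞.ClosedExt S ∧ 𝒞.ClosedCocone S

/-- `g : T ⟶ A` is a right `S`-approximation of `A` -/
def IsRightApprox (S : Set C) {T A : C} (g : T ⟶ A) : Prop :=
  T ∈ S ∧ ∀ T' ∈ S, ∀ h : T' ⟶ A, ∃ k : T' ⟶ T, k ≫ g = h

/-- `g : A ⟶ T` is a left `S`-approximation of `A` -/
def IsLeftApprox (S : Set C) {A T : C} (g : A ⟶ T) : Prop :=
  T ∈ S ∧ ∀ T' ∈ S, ∀ h : A ⟶ T', ∃ k : T ⟶ T', g ≫ k = h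

/-- contravariantly finite : every object has a right `S`-approximation -/
def ContravariantlyFinite (S : Set C) : Prop :=
  ∀ A : C, ∃ (T : C) (g : T ⟶ A), IsRightApprox S g

/-- covariantly finite : every object has a left `S`-approximation -/
def CovariantlyFinite (S : Set C) : Prop :=
  ∀ A : C, ∃ (T : C) (g : A ⟶ T), IsLeftApprox S g

/-- tilting subcategory of projective dimension `n` -/
def IsTilting (S : Set C) (n : ℕ) : Prop :=
  ClosedSummands S ∧ (∀ T ∈ S, 𝒞.projDimLE T n) ∧ 𝒞.GeneratorFor S (𝒞.rperp S)

/-- cotilting subcategory of injective dimension `n` -/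
def IsCotilting (S : Set C) (n : ℕ) : Prop :=
  ClosedSummands S ∧ (∀ T ∈ S, 𝒞.injDimLE T n) ∧ 𝒞.CogeneratorFor S (𝒞.lperp S)

end ECat

end ExtTilting

namespace ExtTilting
open ECat

variable {C : Type u} [Category.{v} C] [Preadditive C]
  [HasFiniteBiproducts C] [HasBinaryBiproducts C]

section Aux
set_option linter.unusedSectionVars false

variable {𝒞 : ECat C}

/-- pushforward of an extension along a morphism of the second argument -/
def epsh {X A B : C} (h : A ⟶ B) (δ : 𝒞.Eext X A) : 𝒞.Eext X B :=
  ((𝒞.E.obj (op X)).map h) δ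

/-- pullback of an extension along a morphism of the first argument -/
def eplb {X Y A : C} (c : Y ⟶ X) (δ : 𝒞.Eext X A) : 𝒞.Eext Y A :=
  ((𝒞.E.map c.op).app A) δ

lemma epsh_id {X A : C} (δ : 𝒞.Eext X A) : epsh (𝟙 A) δ = δ := by
  simp [epsh]
  rfl

lemma epsh_comp {X A B D : C} (h : A ⟶ B) (h' : B ⟶ D) (δ : 𝒞.Eext X A) :
    epsh (h ≫ h') δ = epsh h' (epsh h δ) := by
  simp [epsh]
  rfl

lemma epsh_zero {X A B : C} (h : A ⟶ B) : epsh h (0 : 𝒞.Eext X A) = 0 :=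
  map_zero _

lemma eplb_id {X A : C} (δ : 𝒞.Eext X A) : eplb (𝟙 X) δ = δ := by
  simp [eplb]
  rfl

lemma eplb_comp {X Y Z : C} {A : C} (c : Z ⟶ Y) (c' : Y ⟶ X) (δ : 𝒞.Eext X A) :
    eplb (c ≫ c') δ = eplb c (eplb c' δ) := by
  simp [eplb]
  rfl

lemma eplb_zero {X Y A : C} (c : Y ⟶ X) : eplb c (0 : 𝒞.Eext X A) = 0 :=
  map_zero _

lemma epsh_add {X A B : C} (h h' : A ⟶ B) (δ : 𝒞.Eext X A) :
    epsh (h + h') δ = epsh h δ + epsh h' δ := by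
  haveI := 𝒞.E_additive_right (op X)
  rw [epsh, Functor.map_add]
  rfl

/-- a morphism out of `A` killing `δ` factors through the inflation -/
lemma fact_infl {A B X W : C} {f : A ⟶ B} {g : B ⟶ X} {δ : 𝒞.Eext X A}
    (conf : 𝒞.IsConf f g δ) (h : A ⟶ W) (hv : epsh h δ = 0) :
    ∃ k : B ⟶ W, f ≫ k = h := by
  obtain ⟨b, hb1, _⟩ := 𝒞.real_map h (𝟙 X) conf (𝒞.real_zero W X) (by
    show epsh h δ = eplb (𝟙 X) 0
    rw [hv, eplb_zero])
  exact ⟨b ≫ biprod.fst, by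
    rw [← Category.assoc, hb1, Category.assoc, biprod.inl_fst, Category.comp_id]⟩

/-- a morphism into `X` killing `δ` lifts through the deflation -/
lemma fact_defl {A B X W : C} {f : A ⟶ B} {g : B ⟶ X} {δ : 𝒞.Eext X A}
    (conf : 𝒞.IsConf f g δ) (h : W ⟶ X) (hv : eplb h δ = 0) :
    ∃ k : W ⟶ B, k ≫ g = h := by
  obtain ⟨b, _, hb2⟩ := 𝒞.real_map (𝟙 A) h (𝒞.real_zero A W) conf (by
    show epsh (𝟙 A) (0 : 𝒞.Eext W A) = eplb h δ
    rw [hv, epsh_zero])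
  exact ⟨biprod.inr ≫ b, by
    rw [Category.assoc, hb2, ← Category.assoc, biprod.inr_snd, Category.id_comp]⟩

/-- exactness of `Hom(W,X) → E(W,A) → E(W,B)` at `E(W,A)` -/
lemma exact_one {A B X W : C} {f : A ⟶ B} {g : B ⟶ X} {δ : 𝒞.Eext X A}
    (conf : 𝒞.IsConf f g δ) (α : 𝒞.Eext W A) (hv : epsh f α = 0) :
    ∃ h : W ⟶ X, α = eplb h δ := by
  obtain ⟨B₂, f₂, g₂, confα⟩ := 𝒞.real_exists α
  obtain ⟨j, hj⟩ := fact_infl confα f hv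
  obtain ⟨c, _, hc2⟩ := 𝒞.et3 (𝟙 A) j confα conf (by rw [hj, Category.id_comp])
  refine ⟨c, ?_⟩
  have h2 : epsh (𝟙 A) α = eplb c δ := hc2
  rwa [epsh_id] at h2

/-- exactness of `Hom(D,W) → E(T',W) → E(P,W)` at `E(T',W)` -/
lemma exact_one' {D P T' W : C} {u : D ⟶ P} {p : P ⟶ T'} {θ : 𝒞.Eext T' D}
    (conf : 𝒞.IsConf u p θ) (α : 𝒞.Eext T' W) (hv : eplb p α = 0) :
    ∃ h : D ⟶ W, α = epsh h θ := by
  obtain ⟨Bα, a₁, a₂, confα⟩ := 𝒞.real_exists α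
  obtain ⟨k, hk⟩ := fact_defl confα p hv
  obtain ⟨a, _, ha2⟩ := 𝒞.et3op k (𝟙 T') conf confα (by rw [Category.comp_id, hk])
  refine ⟨a, ?_⟩
  have h2 : epsh a θ = eplb (𝟙 T') α := ha2
  rw [eplb_id] at h2
  exact h2.symm

/-- dimension shift, forward: `E(T'',ΣW) = 0 → E(D,W) = 0` for a conflation
`D → P → T''` with `P` projective. -/
lemma swap_fwd {D P T'' : C} {u : D ⟶ P} {p : P ⟶ T''} {θ : 𝒞.Eext T'' D}
    (conf : 𝒞.IsConf u p θ) (hP : ∀ (A : C) (δ : 𝒞.Eext P A), δ = 0) (W : C)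
    (hS : ∀ γ : 𝒞.Eext T'' (𝒞.Susp W), γ = 0) :
    ∀ β : 𝒞.Eext D W, β = 0 := by
  intro β
  have h1 : epsh (𝒞.ιI W) β = 0 := 𝒞.I_injective W D _
  obtain ⟨s, hs⟩ := exact_one (𝒞.confI W) β h1
  obtain ⟨k, hk⟩ := fact_infl conf s (hS _)
  erw [hs, ← hk, eplb_comp, hP W (eplb k (𝒞.δI W)), eplb_zero]

/-- dimension shift, backward: `E(D,W) = 0 → E(T'',ΣW) = 0` for a conflation
`D → P → T''` with `P` projective. -/
lemma swap_bwd {D P T'' : C} {u : D ⟶ P} {p : P ⟶ T''} {θ : 𝒞.Eext T'' D}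
    (conf : 𝒞.IsConf u p θ) (hP : ∀ (A : C) (δ : 𝒞.Eext P A), δ = 0) (W : C)
    (hS : ∀ β : 𝒞.Eext D W, β = 0) :
    ∀ γ : 𝒞.Eext T'' (𝒞.Susp W), γ = 0 := by
  intro γ
  obtain ⟨h, hh⟩ := exact_one' conf γ (hP _ _)
  obtain ⟨k, hk⟩ := fact_defl (𝒞.confI W) h (hS _)
  erw [hh, ← hk, epsh_comp, 𝒞.I_injective W T'' (epsh k θ), epsh_zero]

/-- `E^{i+1}(T,Y) = 0` iff `E(ΩⁱT, Y) = 0` -/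
lemma extVanish_iff_syzygy (i : ℕ) (T Y : C) :
    𝒞.extVanish i T Y ↔ ∀ δ : 𝒞.Eext (𝒞.Ω^[i] T) Y, δ = 0 := by
  induction i generalizing T Y with
  | zero => exact Iff.rfl
  | succ i ih =>
    constructor
    · intro h
      rw [Function.iterate_succ_apply']
      exact swap_fwd (𝒞.confP (𝒞.Ω^[i] T)) (𝒞.P_projective _) Y
        ((ih T (𝒞.Susp Y)).mp h)
    · intro h
      have h' := h
      rw [Function.iterate_succ_apply'] at h'
      exact (ih T (𝒞.Susp Y)).mpr
        (swap_bwd (𝒞.confP (𝒞.Ω^[i] T)) (𝒞.P_projective _) Y h')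

/-- exactness-type vanishing at the cone: for a conflation `A → B → Cc`,
if `E(T',B) = 0` and `E(ΩT',A) = 0` then `E(T',Cc) = 0`. -/
lemma exact_cone {T' A B Cc : C} {f : A ⟶ B} {g : B ⟶ Cc} {δ : 𝒞.Eext Cc A}
    (conf : 𝒞.IsConf f g δ)
    (hB : ∀ β : 𝒞.Eext T' B, β = 0)
    (hA : ∀ γ : 𝒞.Eext (𝒞.Ω T') A, γ = 0) :
    ∀ α : 𝒞.Eext T' Cc, α = 0 := by
  intro α
  obtain ⟨h, hh⟩ := exact_one' (𝒞.confP T') α (𝒞.P_projective T' Cc _)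
  obtain ⟨k, hk⟩ := fact_defl conf h (hA _)
  erw [hh, ← hk, epsh_comp, hB (epsh k (𝒞.δP T')), epsh_zero]

lemma injective_susp {W : C} (hW : 𝒞.Injective W) : 𝒞.Injective (𝒞.Susp W) := by
  have h0 : 𝒞.δI W = 0 := hW _ _
  have conf : 𝒞.IsConf (𝒞.ιI W) (𝒞.πI W) (0 : 𝒞.Eext (𝒞.Susp W) W) := h0 ▸ 𝒞.confI W
  obtain ⟨b, _, hb2⟩ := 𝒞.real_unique (𝒞.real_zero W (𝒞.Susp W)) conf
  intro X α
  have hs : (biprod.inr ≫ b.hom) ≫ 𝒞.πI W = 𝟙 (𝒞.Susp W) := by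
    rw [Category.assoc, hb2, biprod.inr_snd]
  calc α = epsh (𝟙 (𝒞.Susp W)) α := (epsh_id α).symm
    _ = epsh ((biprod.inr ≫ b.hom) ≫ 𝒞.πI W) α := by rw [hs]
    _ = epsh (𝒞.πI W) (epsh (biprod.inr ≫ b.hom) α) := epsh_comp _ _ _
    _ = 0 := by
        erw [𝒞.I_injective W X (epsh (biprod.inr ≫ b.hom) α), epsh_zero]

lemma injective_susp_iter {W : C} (hW : 𝒞.Injective W) (i : ℕ) :
    𝒞.Injective (𝒞.Susp^[i] W) := by
  induction i with
  | zero => exact hW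
  | succ i ih =>
    rw [Function.iterate_succ_apply']
    exact injective_susp ih

lemma mem_rperp_of_injective {W : C} (hW : 𝒞.Injective W) (S : Set C) :
    W ∈ 𝒞.rperp S :=
  fun T _ i δ => injective_susp_iter hW i T δ

lemma projDimLE_vanish : ∀ (n : ℕ) (T : C), 𝒞.projDimLE T n →
    ∀ (m : ℕ), n ≤ m → ∀ (Y : C) (δ : 𝒞.Eext T (𝒞.Susp^[m] Y)), δ = 0 := by
  intro n
  induction n with
  | zero =>
    intro T hT m _ Y δ
    exact hT _ δ
  | succ n ih =>
    intro T hT m hm Y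
    obtain ⟨P₁, K, hP₁, ⟨u, p, θ, conf⟩, hK⟩ := hT
    obtain ⟨m', rfl⟩ : ∃ m', m = m' + 1 := ⟨m - 1, by omega⟩
    rw [Function.iterate_succ_apply']
    exact swap_bwd conf hP₁ _ (ih K hK m' (by omega) Y)

lemma resol_vanish (𝒯 : Set C) (T : C) (hT : T ∈ 𝒯) :
    ∀ (m : ℕ) (A' A : C), 𝒞.Resol (𝒞.rperp 𝒯) m A' A →
    ∀ i : ℕ, (∀ δ : 𝒞.Eext (𝒞.Ω^[i + m] T) A', δ = 0) →
    ∀ α : 𝒞.Eext (𝒞.Ω^[i] T) A, α = 0 := by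
  intro m
  induction m with
  | zero =>
    intro A' A hres i hA'
    have hAA : A' = A := hres
    subst hAA
    simpa using hA'
  | succ m ih =>
    intro A' A hres i hA'
    obtain ⟨S₁, K, hS₁, ⟨u, p, θ, conf⟩, hres'⟩ := hres
    refine exact_cone conf ?_ ?_
    · exact (extVanish_iff_syzygy i T S₁).mp (hS₁ T hT i)
    · have harg : ∀ δ : 𝒞.Eext (𝒞.Ω^[i + 1 + m] T) A', δ = 0 := by
        have he : i + 1 + m = i + (m + 1) := by omega
        rw [he]
        exact hA'
      have hstep := ih A' K hres' (i + 1) harg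
      rw [Function.iterate_succ_apply'] at hstep
      exact hstep

lemma rperp_biprod {𝒯 : Set C} {A : C} (hA : A ∈ 𝒞.rperp 𝒯) :
    (A ⊞ A) ∈ 𝒞.rperp 𝒯 := by
  intro T hT i
  rw [extVanish_iff_syzygy]
  intro α
  have h1 : ∀ δ : 𝒞.Eext (𝒞.Ω^[i] T) A, δ = 0 :=
    (extVanish_iff_syzygy i T A).mp (hA T hT i)
  calc α = epsh (𝟙 (A ⊞ A)) α := (epsh_id α).symm
    _ = epsh (biprod.fst ≫ biprod.inl + biprod.snd ≫ biprod.inr) α := by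
        rw [biprod.total]
    _ = epsh biprod.inl (epsh biprod.fst α) + epsh biprod.inr (epsh biprod.snd α) := by
        rw [epsh_add, epsh_comp, epsh_comp]
    _ = 0 := by
        rw [h1 (epsh biprod.fst α), h1 (epsh biprod.snd α), epsh_zero, epsh_zero, add_zero]

lemma rperp_resol {𝒯 : Set C} : ∀ (m : ℕ) (A : C), A ∈ 𝒞.rperp 𝒯 →
    ∃ A', 𝒞.Resol (𝒞.rperp 𝒯) m A' A := by
  intro m
  induction m with
  | zero => exact fun A _ => ⟨A, rfl⟩
  | succ m ih =>
    intro A hA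
    obtain ⟨A', h⟩ := ih A hA
    exact ⟨A', A ⊞ A, A, rperp_biprod hA,
      ⟨biprod.inl, biprod.snd, 0, 𝒞.real_zero A A⟩, h⟩

lemma resol_susp (𝒯 : Set C) : ∀ (m : ℕ) (Y : C),
    𝒞.Resol (𝒞.rperp 𝒯) m Y (𝒞.Susp^[m] Y) := by
  intro m
  induction m with
  | zero => exact fun Y => rfl
  | succ m ih =>
    intro Y
    rw [Function.iterate_succ_apply']
    exact ⟨𝒞.I (𝒞.Susp^[m] Y), 𝒞.Susp^[m] Y,
      mem_rperp_of_injective (fun X δ => 𝒞.I_injective _ X δ) 𝒯,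
      ⟨𝒞.ιI _, 𝒞.πI _, 𝒞.δI _, 𝒞.confI _⟩, ih Y⟩

lemma projDimLE_of_syzygy : ∀ (m : ℕ) (X : C),
    𝒞.Projective (𝒞.Ω^[m] X) → 𝒞.projDimLE X m := by
  intro m
  induction m with
  | zero => exact fun X h => h
  | succ m ih =>
    intro X h
    rw [Function.iterate_succ_apply] at h
    exact ⟨𝒞.P X, 𝒞.Ω X, 𝒞.P_projective X,
      ⟨𝒞.ιP X, 𝒞.πP X, 𝒞.δP X, 𝒞.confP X⟩, ih (𝒞.Ω X) h⟩

end Aux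

theorem stmt9 (𝒞 : ECat C) (𝒯 : Set C) (n : ℕ) :
    (∀ T ∈ 𝒯, 𝒞.projDimLE T n) ↔ 𝒞.Pres (𝒞.rperp 𝒯) n = 𝒞.rperp 𝒯 := by
  constructor
  · intro H
    apply Set.Subset.antisymm
    · rintro A ⟨A', hres⟩
      intro T hT i
      rw [extVanish_iff_syzygy]
      exact resol_vanish 𝒯 T hT n A' A hres i
        ((extVanish_iff_syzygy (i + n) T A').mp
          (projDimLE_vanish n T (H T hT) (i + n) (Nat.le_add_left n i) A'))
    · intro A hA
      exact rperp_resol n A hA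
  · intro H T hT
    apply projDimLE_of_syzygy
    intro Y δ
    have h1 : 𝒞.Susp^[n] Y ∈ 𝒞.rperp 𝒯 := H ▸ ⟨Y, resol_susp 𝒯 n Y⟩
    exact (extVanish_iff_syzygy n T Y).mp (fun γ => h1 T hT 0 γ) δ

end ExtTilting
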